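/- Generalized performance difference decomposition: for any policies π, π̂, μ on a discounted MDP with discount γ ∈ (0,1), and any functions U, f : S × A → ℝ, (1-γ)(J_U(π) - J_U(π̂)) = E_μ[(f - T_U^{π̂} f)(s,a)] + E_π[(T_U^{π̂} f - f)(s,a)] + E_π[f(s, π) - f(s, π̂)] + A_μ(π̂, f) - A_μ(π̂, Q_U^{π̂}), where E_π denotes expectation over d^π, A_μ(π̂, f) = E_μ[f(s, π̂) - f(s,a)], and Q_U^{π̂} is the Q-value function of π̂ for U. -/

import Mathlib

open Finset

/-- Distribution over state-action pairs at time `t` when running policy `pol`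
from initial state `s0` in the MDP with transition kernel `P`. -/
noncomputable def stepDist {S A : Type*} [Fintype S] [Fintype A] [DecidableEq S]
    (P : S → A → S → ℝ) (pol : S → A → ℝ) (s0 : S) : ℕ → S → A → ℝ
  | 0 => fun s a => (if s = s0 then (1 : ℝ) else 0) * pol s a
  | (t + 1) => fun s a => (∑ s', ∑ a', stepDist P pol s0 t s' a' * P s' a' s) * pol s a

/-- Discounted occupancy measure d^π(s,a) = (1-γ) Σ_t γ^t P^π(s_t=s, a_t=a). -/
noncomputable def occ {S A : Type*} [Fintype S] [Fintype A] [DecidableEq S]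
    (γ : ℝ) (P : S → A → S → ℝ) (pol : S → A → ℝ) (s0 : S) (s : S) (a : A) : ℝ :=
  (1 - γ) * ∑' t : ℕ, γ ^ t * stepDist P pol s0 t s a

/-- Expectation of `h` under the discounted occupancy measure d^π. -/
noncomputable def Eocc {S A : Type*} [Fintype S] [Fintype A] [DecidableEq S]
    (γ : ℝ) (P : S → A → S → ℝ) (pol : S → A → ℝ) (s0 : S) (h : S → A → ℝ) : ℝ :=
  ∑ s, ∑ a, occ γ P pol s0 s a * h s a

/-- f(s, π) = Σ_a π(a|s) f(s,a). -/
def fPol {S A : Type*} [Fintype A] (f : S → A → ℝ) (pol : S → A → ℝ) (s : S) : ℝ :=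
  ∑ a, pol s a * f s a

/-- Bellman operator (T_U^π f)(s,a) = U(s,a) + γ E_{s'~P(·|s,a)}[f(s',π)]. -/
noncomputable def bellman {S A : Type*} [Fintype S] [Fintype A]
    (γ : ℝ) (P : S → A → S → ℝ) (U : S → A → ℝ) (pol : S → A → ℝ) (f : S → A → ℝ)
    (s : S) (a : A) : ℝ :=
  U s a + γ * ∑ s', P s a s' * fPol f pol s'

/-- J_U(π) = (1/(1-γ)) E_{d^π}[U]. -/
noncomputable def Jval {S A : Type*} [Fintype S] [Fintype A] [DecidableEq S]
    (γ : ℝ) (P : S → A → S → ℝ) (pol : S → A → ℝ) (s0 : S) (U : S → A → ℝ) : ℝ :=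
  (1 / (1 - γ)) * Eocc γ P pol s0 U

/-- `P` is a transition kernel (each row a probability distribution). -/
def IsKernel {S A : Type*} [Fintype S] (P : S → A → S → ℝ) : Prop :=
  ∀ s a, (∀ s', 0 ≤ P s a s') ∧ ∑ s', P s a s' = 1

/-- `pol` is a (Markov stationary) policy. -/
def IsPolicy {S A : Type*} [Fintype A] (pol : S → A → ℝ) : Prop :=
  ∀ s, (∀ a, 0 ≤ pol s a) ∧ ∑ a, pol s a = 1

section Aux

variable {S A : Type*} [Fintype S] [Fintype A] [DecidableEq S]

noncomputable def stepMarg (P : S → A → S → ℝ) (pol : S → A → ℝ) (s0 : S) : ℕ → S → ℝ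
  | 0 => fun s => if s = s0 then (1 : ℝ) else 0
  | (t + 1) => fun s => ∑ s', ∑ a', (stepMarg P pol s0 t s' * pol s' a') * P s' a' s

lemma stepDist_eq (P : S → A → S → ℝ) (pol : S → A → ℝ) (s0 : S) :
    ∀ t s a, stepDist P pol s0 t s a = stepMarg P pol s0 t s * pol s a
  | 0, s, a => rfl
  | (t + 1), s, a => by
    show (∑ s', ∑ a', stepDist P pol s0 t s' a' * P s' a' s) * pol s a
      = (∑ s', ∑ a', (stepMarg P pol s0 t s' * pol s' a') * P s' a' s) * pol s a
    congr 1
    refine Finset.sum_congr rfl fun s' _ => Finset.sum_congr rfl fun a' _ => ?_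
    rw [stepDist_eq P pol s0 t]

variable {γ : ℝ} {P : S → A → S → ℝ} {ρ : S → A → ℝ} {s0 : S}

lemma stepMarg_nonneg (hP : IsKernel P) (hρ : IsPolicy ρ) :
    ∀ t s, 0 ≤ stepMarg P ρ s0 t s := by
  intro t
  induction t with
  | zero => intro s; dsimp [stepMarg]; split <;> norm_num
  | succ t ih =>
    intro s
    refine Finset.sum_nonneg fun s' _ => Finset.sum_nonneg fun a' _ => ?_
    exact mul_nonneg (mul_nonneg (ih s') ((hρ s').1 a')) ((hP s' a').1 s)

lemma stepMarg_sum (hP : IsKernel P) (hρ : IsPolicy ρ) :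
    ∀ t, ∑ s, stepMarg P ρ s0 t s = 1 := by
  intro t
  induction t with
  | zero => simp [stepMarg]
  | succ t ih =>
    show ∑ s, ∑ s', ∑ a', (stepMarg P ρ s0 t s' * ρ s' a') * P s' a' s = 1
    rw [Finset.sum_comm]
    calc ∑ s', ∑ s, ∑ a', (stepMarg P ρ s0 t s' * ρ s' a') * P s' a' s
        = ∑ s', ∑ a', (stepMarg P ρ s0 t s' * ρ s' a') * ∑ s, P s' a' s := by
          refine Finset.sum_congr rfl fun s' _ => ?_
          rw [Finset.sum_comm]
          exact Finset.sum_congr rfl fun a' _ => by rw [Finset.mul_sum]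
      _ = ∑ s', stepMarg P ρ s0 t s' * ∑ a', ρ s' a' := by
          refine Finset.sum_congr rfl fun s' _ => ?_
          rw [Finset.mul_sum]
          exact Finset.sum_congr rfl fun a' _ => by rw [(hP s' a').2, mul_one]
      _ = 1 := by
          rw [← ih]
          exact Finset.sum_congr rfl fun s' _ => by rw [(hρ s').2, mul_one]

lemma stepMarg_le_one (hP : IsKernel P) (hρ : IsPolicy ρ) (t : ℕ) (s : S) :
    stepMarg P ρ s0 t s ≤ 1 := by
  rw [← stepMarg_sum (s0 := s0) hP hρ t]
  exact Finset.single_le_sum (fun s' _ => stepMarg_nonneg hP hρ t s') (Finset.mem_univ s)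

lemma Eocc_eq_tsum (hγ0 : 0 ≤ γ) (hγ1 : γ < 1) (hP : IsKernel P) (hρ : IsPolicy ρ)
    (h : S → A → ℝ) :
    Eocc γ P ρ s0 h
      = (1 - γ) * ∑' t : ℕ, γ ^ t * ∑ s, ∑ a, stepDist P ρ s0 t s a * h s a := by
  have hsm : ∀ s a, Summable (fun t : ℕ => γ ^ t * (stepDist P ρ s0 t s a * h s a)) := by
    intro s a
    apply Summable.of_norm_bounded (g := fun t : ℕ => |ρ s a * h s a| * γ ^ t)
      ((summable_geometric_of_lt_one hγ0 hγ1).mul_left _)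
    intro t
    rw [Real.norm_eq_abs, abs_mul, abs_pow, abs_of_nonneg hγ0, mul_comm]
    apply mul_le_mul_of_nonneg_right _ (pow_nonneg hγ0 t)
    rw [stepDist_eq, mul_assoc, abs_mul, abs_mul]
    have h1 : |stepMarg P ρ s0 t s| ≤ 1 := by
      rw [abs_of_nonneg (stepMarg_nonneg hP hρ t s)]
      exact stepMarg_le_one hP hρ t s
    nlinarith [mul_nonneg (abs_nonneg (ρ s a)) (abs_nonneg (h s a)), abs_nonneg (stepMarg P ρ s0 t s)]
  unfold Eocc occ
  have step1 : ∀ s a, ((1 - γ) * ∑' t : ℕ, γ ^ t * stepDist P ρ s0 t s a) * h s a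
      = (1 - γ) * ∑' t : ℕ, γ ^ t * (stepDist P ρ s0 t s a * h s a) := by
    intro s a
    rw [mul_assoc, ← tsum_mul_right]
    exact congrArg _ (tsum_congr fun t => by ring)
  simp only [step1, ← Finset.mul_sum]
  congr 1
  calc ∑ s, ∑ a, ∑' t : ℕ, γ ^ t * (stepDist P ρ s0 t s a * h s a)
      = ∑ s, ∑' t : ℕ, ∑ a, γ ^ t * (stepDist P ρ s0 t s a * h s a) := by
        refine Finset.sum_congr rfl fun s _ => ?_
        exact (Summable.tsum_finsetSum fun a _ => hsm s a).symm
    _ = ∑' t : ℕ, ∑ s, ∑ a, γ ^ t * (stepDist P ρ s0 t s a * h s a) := by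
        exact (Summable.tsum_finsetSum fun s _ => summable_sum fun a _ => hsm s a).symm
    _ = ∑' t : ℕ, γ ^ t * ∑ s, ∑ a, stepDist P ρ s0 t s a * h s a := by
        refine tsum_congr fun t => ?_
        rw [Finset.mul_sum]
        exact Finset.sum_congr rfl fun s _ => by rw [Finset.mul_sum]

lemma summable_M (hγ0 : 0 ≤ γ) (hγ1 : γ < 1) (hP : IsKernel P) (hρ : IsPolicy ρ)
    (g : S → ℝ) : Summable (fun t : ℕ => γ ^ t * ∑ s, stepMarg P ρ s0 t s * g s) := by
  apply Summable.of_norm_bounded (g := fun t : ℕ => (∑ s, |g s|) * γ ^ t)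
    ((summable_geometric_of_lt_one hγ0 hγ1).mul_left _)
  intro t
  rw [Real.norm_eq_abs, abs_mul, abs_pow, abs_of_nonneg hγ0, mul_comm]
  apply mul_le_mul_of_nonneg_right _ (pow_nonneg hγ0 t)
  calc |∑ s, stepMarg P ρ s0 t s * g s| ≤ ∑ s, |stepMarg P ρ s0 t s * g s| :=
        Finset.abs_sum_le_sum_abs _ _
    _ ≤ ∑ s, |g s| := by
        refine Finset.sum_le_sum fun s _ => ?_
        rw [abs_mul, abs_of_nonneg (stepMarg_nonneg hP hρ t s)]
        nlinarith [abs_nonneg (g s), stepMarg_nonneg (s0 := s0) hP hρ t s,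
          stepMarg_le_one (s0 := s0) hP hρ t s]

lemma flow (hγ0 : 0 ≤ γ) (hγ1 : γ < 1) (hP : IsKernel P) (hρ : IsPolicy ρ) (g : S → ℝ) :
    Eocc γ P ρ s0 (fun s _ => g s)
      - γ * Eocc γ P ρ s0 (fun s a => ∑ s', P s a s' * g s')
      = (1 - γ) * g s0 := by
  set M : ℕ → ℝ := fun t => ∑ s, stepMarg P ρ s0 t s * g s with hM
  have hd : ∀ t, ∑ s, ∑ a, stepDist P ρ s0 t s a * g s = M t := by
    intro t
    refine Finset.sum_congr rfl fun s _ => ?_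
    simp only [stepDist_eq]
    calc ∑ a, stepMarg P ρ s0 t s * ρ s a * g s
        = (stepMarg P ρ s0 t s * g s) * ∑ a, ρ s a := by
          rw [Finset.mul_sum]
          exact Finset.sum_congr rfl fun a _ => by ring
      _ = stepMarg P ρ s0 t s * g s := by rw [(hρ s).2, mul_one]
  have hd2 : ∀ t, ∑ s, ∑ a, stepDist P ρ s0 t s a * (∑ s', P s a s' * g s') = M (t + 1) := by
    intro t
    have hm1 : ∀ s', stepMarg P ρ s0 (t + 1) s'
        = ∑ s, ∑ a, (stepMarg P ρ s0 t s * ρ s a) * P s a s' := fun s' => rfl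
    calc ∑ s, ∑ a, stepDist P ρ s0 t s a * (∑ s', P s a s' * g s')
        = ∑ s, ∑ a, ∑ s', (stepMarg P ρ s0 t s * ρ s a) * P s a s' * g s' := by
          refine Finset.sum_congr rfl fun s _ => Finset.sum_congr rfl fun a _ => ?_
          rw [stepDist_eq, Finset.mul_sum]
          exact Finset.sum_congr rfl fun s' _ => by ring
      _ = ∑ s', ∑ s, ∑ a, (stepMarg P ρ s0 t s * ρ s a) * P s a s' * g s' := by
          refine Eq.trans (Finset.sum_congr rfl fun s _ => Finset.sum_comm) ?_
          exact Finset.sum_comm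
      _ = ∑ s', (∑ s, ∑ a, (stepMarg P ρ s0 t s * ρ s a) * P s a s') * g s' := by
          refine Finset.sum_congr rfl fun s' _ => ?_
          rw [Finset.sum_mul]
          exact Finset.sum_congr rfl fun s _ => by rw [Finset.sum_mul]
      _ = M (t + 1) := by
          refine (Finset.sum_congr rfl fun s' _ => ?_).symm
          rw [hm1]
  have hsum1 : Summable (fun t : ℕ => γ ^ t * M t) := summable_M hγ0 hγ1 hP hρ g
  rw [Eocc_eq_tsum hγ0 hγ1 hP hρ, Eocc_eq_tsum hγ0 hγ1 hP hρ]
  simp only [hd, hd2]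
  have hshift : γ * ∑' t : ℕ, γ ^ t * M (t + 1) = (∑' t : ℕ, γ ^ t * M t) - γ ^ 0 * M 0 := by
    have h2 : γ * ∑' t : ℕ, γ ^ t * M (t + 1) = ∑' t : ℕ, γ ^ (t + 1) * M (t + 1) := by
      rw [← tsum_mul_left]
      exact tsum_congr fun t => by ring
    rw [h2]
    have h3 := Summable.tsum_eq_zero_add hsum1
    linarith [h3]
  have hM0 : M 0 = g s0 := by
    show ∑ s, (if s = s0 then (1 : ℝ) else 0) * g s = g s0
    simp
  rw [hM0] at hshift
  nlinarith [hshift]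

lemma samePol (hγ0 : 0 ≤ γ) (hγ1 : γ < 1) (hP : IsKernel P) (hρ : IsPolicy ρ)
    (h : S → A → ℝ) :
    Eocc γ P ρ s0 h = Eocc γ P ρ s0 (fun s _ => fPol h ρ s) := by
  rw [Eocc_eq_tsum hγ0 hγ1 hP hρ, Eocc_eq_tsum hγ0 hγ1 hP hρ]
  congr 1
  refine tsum_congr fun t => ?_
  congr 1
  refine Finset.sum_congr rfl fun s _ => ?_
  simp only [stepDist_eq]
  calc ∑ a, stepMarg P ρ s0 t s * ρ s a * h s a
      = stepMarg P ρ s0 t s * fPol h ρ s := by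
        rw [fPol, Finset.mul_sum]
        exact Finset.sum_congr rfl fun a _ => by ring
    _ = (stepMarg P ρ s0 t s * fPol h ρ s) * ∑ a, ρ s a := by rw [(hρ s).2, mul_one]
    _ = ∑ a, stepMarg P ρ s0 t s * ρ s a * fPol h ρ s := by
        rw [Finset.mul_sum]
        exact Finset.sum_congr rfl fun a _ => by ring

end Aux

/-- performance difference decomposition (Lemma 12 of Cheng et al.). -/
theorem stmt7 {S A : Type*} [Fintype S] [Fintype A] [DecidableEq S]
    (γ : ℝ) (hγ0 : 0 < γ) (hγ1 : γ < 1)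
    (P : S → A → S → ℝ) (hP : IsKernel P)
    (pol polhat polmu : S → A → ℝ)
    (hpol : IsPolicy pol) (hpolhat : IsPolicy polhat) (hpolmu : IsPolicy polmu)
    (s0 : S) (U f Q : S → A → ℝ)
    (hQ : ∀ s a, Q s a = bellman γ P U polhat Q s a) :
    (1 - γ) * (Jval γ P pol s0 U - Jval γ P polhat s0 U)
      = Eocc γ P polmu s0 (fun s a => f s a - bellman γ P U polhat f s a)
        + Eocc γ P pol s0 (fun s a => bellman γ P U polhat f s a - f s a)
        + Eocc γ P pol s0 (fun s a => fPol f pol s - fPol f polhat s)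
        + Eocc γ P polmu s0 (fun s a => fPol f polhat s - f s a)
        - Eocc γ P polmu s0 (fun s a => fPol Q polhat s - Q s a) := by
  have hγ0' : (0:ℝ) ≤ γ := le_of_lt hγ0
  have hne : (1:ℝ) - γ ≠ 0 := by linarith
  have hJ : (1 - γ) * (Jval γ P pol s0 U - Jval γ P polhat s0 U)
      = Eocc γ P pol s0 U - Eocc γ P polhat s0 U := by
    unfold Jval; field_simp
  have e1 := flow (s0 := s0) hγ0' hγ1 hP hpolmu (fPol f polhat)
  have e2 := flow (s0 := s0) hγ0' hγ1 hP hpolmu (fPol Q polhat)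
  have e3 := flow (s0 := s0) hγ0' hγ1 hP hpol (fPol f polhat)
  have e4 := flow (s0 := s0) hγ0' hγ1 hP hpolhat (fPol Q polhat)
  have e5 := samePol (s0 := s0) hγ0' hγ1 hP hpol f
  have e6 := samePol (s0 := s0) hγ0' hγ1 hP hpolhat Q
  have hQ' : ∀ s a, Q s a = U s a + γ * ∑ s', P s a s' * fPol Q polhat s' := hQ
  have e7 : ∀ ρh : S → A → ℝ, Eocc γ P ρh s0 Q
      = Eocc γ P ρh s0 U
        + γ * Eocc γ P ρh s0 (fun s a => ∑ s', P s a s' * fPol Q polhat s') := by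
    intro ρh
    calc Eocc γ P ρh s0 Q
        = Eocc γ P ρh s0 (fun s a => U s a + γ * ∑ s', P s a s' * fPol Q polhat s') := by
          unfold Eocc
          refine Finset.sum_congr rfl fun s _ => Finset.sum_congr rfl fun a _ => ?_
          dsimp only
          rw [← hQ' s a]
      _ = _ := by
          simp only [Eocc, mul_add, Finset.sum_add_distrib, Finset.mul_sum, mul_left_comm]
  have t1 : Eocc γ P polmu s0 (fun s a => f s a - bellman γ P U polhat f s a)
      = Eocc γ P polmu s0 f - (Eocc γ P polmu s0 U
          + γ * Eocc γ P polmu s0 (fun s a => ∑ s', P s a s' * fPol f polhat s')) := by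
    simp only [Eocc, bellman, mul_sub, mul_add, Finset.sum_sub_distrib,
      Finset.sum_add_distrib, Finset.mul_sum, mul_left_comm]
  have t2 : Eocc γ P pol s0 (fun s a => bellman γ P U polhat f s a - f s a)
      = (Eocc γ P pol s0 U
          + γ * Eocc γ P pol s0 (fun s a => ∑ s', P s a s' * fPol f polhat s'))
        - Eocc γ P pol s0 f := by
    simp only [Eocc, bellman, mul_sub, mul_add, Finset.sum_sub_distrib,
      Finset.sum_add_distrib, Finset.mul_sum, mul_left_comm]
  have t3 : Eocc γ P pol s0 (fun s a => fPol f pol s - fPol f polhat s)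
      = Eocc γ P pol s0 (fun s _ => fPol f pol s)
        - Eocc γ P pol s0 (fun s _ => fPol f polhat s) := by
    simp only [Eocc, mul_sub, Finset.sum_sub_distrib]
  have t4 : Eocc γ P polmu s0 (fun s a => fPol f polhat s - f s a)
      = Eocc γ P polmu s0 (fun s _ => fPol f polhat s) - Eocc γ P polmu s0 f := by
    simp only [Eocc, mul_sub, Finset.sum_sub_distrib]
  have t5 : Eocc γ P polmu s0 (fun s a => fPol Q polhat s - Q s a)
      = Eocc γ P polmu s0 (fun s _ => fPol Q polhat s) - Eocc γ P polmu s0 Q := by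
    simp only [Eocc, mul_sub, Finset.sum_sub_distrib]
  rw [hJ, t1, t2, t3, t4, t5]
  linarith [e1, e2, e3, e4, e5, e6, e7 polmu, e7 polhat]
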